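/- Let 1 → A → G̃ → Γ → 1 be a central extension of groups with A ≅ Z/n for n ≥ 1. If G̃ is residually finite, then there is a finite-index subgroup Υ of Γ such that the restriction of the extension to Υ splits, i.e., the preimage of Υ in G̃ contains a subgroup mapping isomorphically onto Υ. -/
import Mathlib


/-- A group is residually finite if every non-trivial element lies outside some
finite-index subgroup. -/
def ResiduallyFinite (G : Type*) [Group G] : Prop :=
  ∀ g : G, g ≠ 1 → ∃ H : Subgroup G, H.FiniteIndex ∧ g ∉ H

/-- Let `1 → A → G̃ → Γ → 1` be a central extension of groups with `A ≅ ℤ/n`, `n ≥ 1`.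
If `G̃` is residually finite, then there is a finite-index subgroup `Υ` of `Γ` such that
the restriction of the extension to `Υ` splits: the preimage of `Υ` in `G̃` contains a
subgroup mapping isomorphically onto `Υ`. -/
theorem stmt2 (Gt Γ : Type*) [Group Gt] [Group Γ] (n : ℕ) (hn : 1 ≤ n)
    (π : Gt →* Γ) (hsurj : Function.Surjective π)
    (hcentral : π.ker ≤ Subgroup.center Gt)
    (iso : π.ker ≃* Multiplicative (ZMod n))
    (hRF : ResiduallyFinite Gt) :
    ∃ Υ : Subgroup Γ, Υ.FiniteIndex ∧
      ∃ S : Subgroup Gt, S.map π = Υ ∧ Function.Injective (fun s : S => π (s : Gt)) := by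
  haveI : NeZero n := ⟨by omega⟩
  haveI : Finite π.ker := Finite.of_equiv _ iso.symm.toEquiv
  -- choose for each kernel element a finite-index subgroup avoiding it
  have hch : ∀ a : π.ker, ∃ H : Subgroup Gt, H.FiniteIndex ∧ ((a : Gt) ≠ 1 → (a : Gt) ∉ H) := by
    intro a
    by_cases h : (a : Gt) = 1
    · exact ⟨⊤, Subgroup.instFiniteIndexTop, fun h' => absurd h h'⟩
    · obtain ⟨H, hH1, hH2⟩ := hRF a h
      exact ⟨H, hH1, fun _ => hH2⟩
  choose f hf1 hf2 using hch
  set K : Subgroup Gt := ⨅ a : π.ker, f a with hK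
  haveI : ∀ a : π.ker, (f a).FiniteIndex := hf1
  haveI hKfi : K.FiniteIndex := Subgroup.finiteIndex_iInf hf1
  have hKker : ∀ g : Gt, g ∈ K → g ∈ π.ker → g = 1 := by
    intro g hgK hgker
    by_contra hne
    have : g ∉ f ⟨g, hgker⟩ := hf2 ⟨g, hgker⟩ hne
    exact this ((Subgroup.mem_iInf.mp hgK) ⟨g, hgker⟩)
  refine ⟨K.map π, ?_, K, rfl, ?_⟩
  · have h1 : K ≤ (K.map π).comap π := Subgroup.le_comap_map π K
    haveI : ((K.map π).comap π).FiniteIndex := Subgroup.finiteIndex_of_le h1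
    constructor
    rw [← Subgroup.index_comap_of_surjective _ hsurj]
    exact Subgroup.FiniteIndex.index_ne_zero
  · intro s t hst
    have hker : ((s : Gt) * (t : Gt)⁻¹) ∈ π.ker := by
      simp only [MonoidHom.mem_ker, map_mul, map_inv]
      simp only at hst
      rw [hst, mul_inv_cancel]
    have hKm : ((s : Gt) * (t : Gt)⁻¹) ∈ K := K.mul_mem s.2 (K.inv_mem t.2)
    have := hKker _ hKm hker
    have : (s : Gt) = t := by
      rwa [mul_inv_eq_one] at this
    exact Subtype.ext this
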